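/- Given a finite sequence (w_1, ..., w_m) of positive real numbers with total sum w, there exists a sequence (a_1, ..., a_m) of nonempty binary strings, strictly increasing in the order ≺, and an index k, such that |a_i| ≤ ⌊log₂(w + w_k) − log₂ w_i⌋ for all i. -/
import Mathlib


/-- The base relations: `s·0·t ≺ s` and `s ≺ s·1·t'`. -/
def PrecBase (a b : List Bool) : Prop :=
  (∃ s t, a = s ++ false :: t ∧ b = s) ∨ (∃ s t, b = s ++ true :: t ∧ a = s)

/-- The order `≺` on binary strings: the transitive closure of `PrecBase`. -/
def Prec : List Bool → List Bool → Prop :=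
  Relation.TransGen PrecBase

/-! ### Valuation of binary strings -/

noncomputable def sval : List Bool → ℝ
  | [] => 1/2
  | b :: t => ((if b then 1 else 0) + sval t)/2

lemma sval_pos (l : List Bool) : 0 < sval l := by
  induction l with
  | nil => norm_num [sval]
  | cons b t ih => by_cases hb : b <;> simp [sval, hb] <;> linarith

lemma sval_lt_one (l : List Bool) : sval l < 1 := by
  induction l with
  | nil => norm_num [sval]
  | cons b t ih =>
    have := sval_pos t
    by_cases hb : b <;> simp [sval, hb] <;> linarith

lemma sval_false_lt (l : List Bool) : sval (false :: l) < 1/2 := by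
  have := sval_lt_one l; simp [sval]; linarith

lemma lt_sval_true (l : List Bool) : 1/2 < sval (true :: l) := by
  have := sval_pos l; simp [sval]; linarith

lemma sval_cons_lt {s t : List Bool} (b : Bool) (h : sval s < sval t) :
    sval (b :: s) < sval (b :: t) := by
  by_cases hb : b <;> simp [sval, hb] <;> linarith

lemma precBase_cons {s t : List Bool} (b : Bool) (h : PrecBase s t) :
    PrecBase (b :: s) (b :: t) := by
  rcases h with ⟨x, y, h1, h2⟩ | ⟨x, y, h1, h2⟩
  · exact Or.inl ⟨b :: x, y, by rw [h1]; rfl, by rw [h2]⟩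
  · exact Or.inr ⟨b :: x, y, by rw [h1]; rfl, by rw [h2]⟩

lemma prec_cons {s t : List Bool} (b : Bool) (h : Prec s t) : Prec (b :: s) (b :: t) := by
  induction h with
  | single h' => exact Relation.TransGen.single (precBase_cons b h')
  | tail _ h' ih => exact Relation.TransGen.tail ih (precBase_cons b h')

lemma prec_of_sval_lt : ∀ s t : List Bool, sval s < sval t → Prec s t := by
  intro s
  induction s with
  | nil =>
    intro t h
    cases t with
    | nil => exact absurd h (lt_irrefl _)
    | cons y u =>
      cases y with
      | false => exact absurd h (not_lt.2 (le_of_lt (sval_false_lt u)))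
      | true => exact Relation.TransGen.single (Or.inr ⟨[], u, rfl, rfl⟩)
  | cons x s ih =>
    intro t h
    cases t with
    | nil =>
      cases x with
      | false => exact Relation.TransGen.single (Or.inl ⟨[], s, rfl, rfl⟩)
      | true => exact absurd h (not_lt.2 (le_of_lt (lt_sval_true s)))
    | cons y u =>
      cases x with
      | false =>
        cases y with
        | false =>
          have h' : sval s < sval u := by
            simp only [sval, if_neg Bool.false_ne_true] at h; linarith
          exact prec_cons false (ih u h')
        | true =>
          exact Relation.TransGen.tail
            (Relation.TransGen.single (Or.inl ⟨[], s, rfl, rfl⟩)) (Or.inr ⟨[], u, rfl, rfl⟩)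
      | true =>
        cases y with
        | false =>
          have h1 := lt_sval_true s
          have h2 := sval_false_lt u
          linarith
        | true =>
          have h' : sval s < sval u := by
            simp only [sval, if_pos rfl] at h; linarith
          exact prec_cons true (ih u h')

/-! ### Splitting lemmas -/

open Classical in
lemma split1 (ws : List ℝ) (hne : ws ≠ []) (hS : 0 < ws.sum) :
    ∃ k < ws.length, (ws.take k).sum ≤ ws.sum / 2 ∧ (ws.drop (k+1)).sum ≤ ws.sum / 2 := by
  set n := ws.length with hn
  have hn1 : 1 ≤ n := by
    rcases ws with _ | ⟨a, l⟩
    · exact absurd rfl hne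
    · simp [hn]
  set P : ℕ → Prop := fun k => (ws.take k).sum ≤ ws.sum / 2 with hP
  have hP0 : P 0 := by simp [hP]; linarith
  set k := Nat.findGreatest P (n - 1) with hk
  have hkle : k ≤ n - 1 := Nat.findGreatest_le (P := P) (n - 1)
  have hklt : k < n := lt_of_le_of_lt hkle (by omega)
  have hPk : P k := Nat.findGreatest_spec (Nat.zero_le _) hP0
  refine ⟨k, hklt, hPk, ?_⟩
  have hsum : (ws.take (k+1)).sum + (ws.drop (k+1)).sum = ws.sum := by
    rw [← List.sum_append, List.take_append_drop]
  rcases eq_or_lt_of_le hkle with heq | hlt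
  · have : ws.drop (k+1) = [] := by
      apply List.drop_eq_nil_of_le; omega
    simp [this]; linarith
  · have hnot : ¬ P (k+1) := Nat.findGreatest_is_greatest (P := P) (n := n - 1) (k := k + 1) (by omega) (by omega)
    have : ws.sum / 2 < (ws.take (k+1)).sum := not_le.1 hnot
    linarith

open Classical in
lemma split2 (ws : List ℝ) (C M : ℝ) (h0 : 0 ≤ C) (hM : ∀ x ∈ ws, x ≤ M)
    (hsum : ws.sum + M ≤ 2 * C) :
    ∃ c ≤ ws.length, (ws.take c).sum ≤ C ∧ (ws.drop c).sum ≤ C := by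
  set n := ws.length with hn
  set P : ℕ → Prop := fun k => (ws.take k).sum ≤ C with hP
  have hP0 : P 0 := by simp [hP, h0]
  set c := Nat.findGreatest P n with hc
  have hcle : c ≤ n := Nat.findGreatest_le (P := P) n
  have hPc : P c := Nat.findGreatest_spec (Nat.zero_le _) hP0
  refine ⟨c, hcle, hPc, ?_⟩
  have hsum2 : (ws.take c).sum + (ws.drop c).sum = ws.sum := by
    rw [← List.sum_append, List.take_append_drop]
  rcases eq_or_lt_of_le hcle with heq | hlt
  · have : ws.drop c = [] := List.drop_eq_nil_of_le (by omega)
    simp [this]; linarith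
  · have hnot : ¬ P (c+1) := Nat.findGreatest_is_greatest (P := P) (n := n) (k := c + 1) (by omega) (by omega)
    have h1 : C < (ws.take (c+1)).sum := not_le.1 hnot
    have htks : (ws.take (c+1)).sum = (ws.take c).sum + ws[c] :=
      List.sum_take_succ ws c hlt
    have hmem : ws[c] ∈ ws := List.getElem_mem hlt
    have hMc : ws[c] ≤ M := hM _ hmem
    linarith

/-! ### The weight-balanced tree construction -/

lemma buildExists : ∀ (n : ℕ) (ws : List ℝ), ws.length = n → (∀ x ∈ ws, 0 < x) →
    ∃ bs : List (List Bool), bs.length = ws.length ∧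
      bs.Pairwise (fun x y => sval x < sval y) ∧
      List.Forall₂ (fun u b => u * 2 ^ b.length ≤ ws.sum) ws bs := by
  intro n
  induction n using Nat.strong_induction_on with
  | _ n ih =>
    intro ws hlen hpos
    rcases eq_or_ne ws [] with rfl | hne
    · exact ⟨[], rfl, List.Pairwise.nil, List.Forall₂.nil⟩
    have hS : 0 < ws.sum := List.sum_pos ws hpos hne
    obtain ⟨k, hklt, hL, hR⟩ := split1 ws hne hS
    set L := ws.take k with hLdef
    set R := ws.drop (k+1) with hRdef
    set u := ws[k] with hudef
    have hws : ws = L ++ u :: R := by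
      rw [hLdef, hRdef, hudef, ← List.drop_eq_getElem_cons hklt, List.take_append_drop]
    have hLlen : L.length = k := by simp [hLdef]; omega
    have hRlen : R.length = ws.length - (k+1) := by simp [hRdef]
    have hLpos : ∀ x ∈ L, 0 < x := fun x hx => hpos x (List.mem_of_mem_take hx)
    have hRpos : ∀ x ∈ R, 0 < x := fun x hx => hpos x (List.mem_of_mem_drop hx)
    obtain ⟨bsL, hlenL, hpwL, hfaL⟩ := ih L.length (by omega) L rfl hLpos
    obtain ⟨bsR, hlenR, hpwR, hfaR⟩ := ih R.length (by omega) R rfl hRpos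
    have hLsum : 0 ≤ L.sum := List.sum_nonneg (fun x hx => le_of_lt (hLpos x hx))
    have hRsum : 0 ≤ R.sum := List.sum_nonneg (fun x hx => le_of_lt (hRpos x hx))
    have hsplit : L.sum + u + R.sum = ws.sum := by
      conv_rhs => rw [hws]
      simp [List.sum_append]; ring
    refine ⟨bsL.map (List.cons false) ++ [] :: bsR.map (List.cons true), ?_, ?_, ?_⟩
    · rw [hws]; simp [hlenL, hlenR]
    · rw [List.pairwise_append]
      refine ⟨?_, ?_, ?_⟩
      · rw [List.pairwise_map]
        exact hpwL.imp (fun h => sval_cons_lt false h)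
      · rw [List.pairwise_cons]
        constructor
        · intro b hb
          obtain ⟨y, _, rfl⟩ := List.mem_map.1 hb
          have := lt_sval_true y
          simpa [sval] using this
        · rw [List.pairwise_map]
          exact hpwR.imp (fun h => sval_cons_lt true h)
      · intro a ha b hb
        obtain ⟨x, _, rfl⟩ := List.mem_map.1 ha
        have hax := sval_false_lt x
        rcases List.mem_cons.1 hb with rfl | hb'
        · simpa [sval] using hax
        · obtain ⟨y, _, rfl⟩ := List.mem_map.1 hb'
          have := lt_sval_true y
          linarith
    · have hfL : List.Forall₂ (fun v b => v * 2 ^ b.length ≤ ws.sum) L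
          (bsL.map (List.cons false)) := by
        rw [List.forall₂_map_right_iff]
        refine List.Forall₂.imp ?_ hfaL
        intro a b hab
        simp only [List.length_cons]
        calc a * 2 ^ (b.length + 1) = 2 * (a * 2 ^ b.length) := by ring
          _ ≤ 2 * L.sum := by linarith
          _ ≤ ws.sum := by linarith
      have hfR : List.Forall₂ (fun v b => v * 2 ^ b.length ≤ ws.sum) R
          (bsR.map (List.cons true)) := by
        rw [List.forall₂_map_right_iff]
        refine List.Forall₂.imp ?_ hfaR
        intro a b hab
        simp only [List.length_cons]
        calc a * 2 ^ (b.length + 1) = 2 * (a * 2 ^ b.length) := by ring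
          _ ≤ 2 * R.sum := by linarith
          _ ≤ ws.sum := by linarith
      have hfu : (fun v b => v * 2 ^ (b : List Bool).length ≤ ws.sum) u [] := by
        simp only [List.length_nil, pow_zero, mul_one]
        have : 0 < u := hpos u (hws ▸ (by simp : u ∈ L ++ u :: R))
        linarith
      have := List.rel_append hfL (List.Forall₂.cons hfu hfR)
      beta_reduce at this
      rwa [← hws] at this

lemma topExists (ws : List ℝ) (M : ℝ) (hpos : ∀ x ∈ ws, 0 < x)
    (hM : ∀ x ∈ ws, x ≤ M) (hM0 : 0 ≤ M) :
    ∃ bs : List (List Bool), bs.length = ws.length ∧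
      bs.Pairwise (fun x y => sval x < sval y) ∧
      List.Forall₂ (fun u b => b ≠ [] ∧ u * 2 ^ b.length ≤ ws.sum + M) ws bs := by
  have hsum0 : 0 ≤ ws.sum := List.sum_nonneg (fun x hx => le_of_lt (hpos x hx))
  set C := (ws.sum + M) / 2 with hC
  obtain ⟨c, hcle, hLC, hRC⟩ := split2 ws C M (by linarith) hM (by linarith)
  set L := ws.take c with hLdef
  set R := ws.drop c with hRdef
  have hws : ws = L ++ R := (List.take_append_drop c ws).symm
  have hLpos : ∀ x ∈ L, 0 < x := fun x hx => hpos x (List.mem_of_mem_take hx)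
  have hRpos : ∀ x ∈ R, 0 < x := fun x hx => hpos x (List.mem_of_mem_drop hx)
  obtain ⟨bsL, hlenL, hpwL, hfaL⟩ := buildExists L.length L rfl hLpos
  obtain ⟨bsR, hlenR, hpwR, hfaR⟩ := buildExists R.length R rfl hRpos
  refine ⟨bsL.map (List.cons false) ++ bsR.map (List.cons true), ?_, ?_, ?_⟩
  · conv_rhs => rw [hws]
    simp [hlenL, hlenR]
  · rw [List.pairwise_append]
    refine ⟨?_, ?_, ?_⟩
    · rw [List.pairwise_map]
      exact hpwL.imp (fun h => sval_cons_lt false h)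
    · rw [List.pairwise_map]
      exact hpwR.imp (fun h => sval_cons_lt true h)
    · intro a ha b hb
      obtain ⟨x, _, rfl⟩ := List.mem_map.1 ha
      obtain ⟨y, _, rfl⟩ := List.mem_map.1 hb
      have h1 := sval_false_lt x
      have h2 := lt_sval_true y
      linarith
  · have hfL : List.Forall₂ (fun v b => b ≠ [] ∧ v * 2 ^ (b : List Bool).length ≤ ws.sum + M) L
        (bsL.map (List.cons false)) := by
      rw [List.forall₂_map_right_iff]
      refine List.Forall₂.imp ?_ hfaL
      intro a b hab
      refine ⟨by simp, ?_⟩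
      simp only [List.length_cons]
      calc a * 2 ^ (b.length + 1) = 2 * (a * 2 ^ b.length) := by ring
        _ ≤ 2 * L.sum := by linarith
        _ ≤ ws.sum + M := by rw [hC] at hLC; linarith
    have hfR : List.Forall₂ (fun v b => b ≠ [] ∧ v * 2 ^ (b : List Bool).length ≤ ws.sum + M) R
        (bsR.map (List.cons true)) := by
      rw [List.forall₂_map_right_iff]
      refine List.Forall₂.imp ?_ hfaR
      intro a b hab
      refine ⟨by simp, ?_⟩
      simp only [List.length_cons]
      calc a * 2 ^ (b.length + 1) = 2 * (a * 2 ^ b.length) := by ring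
        _ ≤ 2 * R.sum := by linarith
        _ ≤ ws.sum + M := by rw [hC] at hRC; linarith
    have := List.rel_append hfL hfR
    beta_reduce at this
    rwa [← hws] at this

open Real in
/-- Given positive weights `w_1, …, w_m` summing to `w`, there are a `≺`-increasing
sequence of *nonempty* binary strings and an index `k` with
`|a_i| ≤ ⌊log₂(w + w_k) − log₂ w_i⌋`. -/
theorem stmt12 (m : ℕ) (hm : 1 ≤ m) (w : Fin m → ℝ) (hw : ∀ i, 0 < w i) :
    ∃ (a : Fin m → List Bool) (k : Fin m),
      (∀ i, a i ≠ []) ∧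
      (∀ i j : Fin m, i < j → Prec (a i) (a j)) ∧
      ∀ i, ((a i).length : ℤ) ≤ ⌊logb 2 ((∑ j, w j) + w k) - logb 2 (w i)⌋ := by
  haveI : Nonempty (Fin m) := ⟨⟨0, hm⟩⟩
  obtain ⟨k, hk⟩ := Finite.exists_max w
  set ws : List ℝ := List.ofFn w with hwsdef
  have hlenws : ws.length = m := by simp [hwsdef]
  have hsumws : ws.sum = ∑ j, w j := by simp [hwsdef, List.sum_ofFn]
  have hpos : ∀ x ∈ ws, 0 < x := by
    intro x hx
    rw [List.mem_ofFn] at hx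
    obtain ⟨i, rfl⟩ := hx
    exact hw i
  have hMx : ∀ x ∈ ws, x ≤ w k := by
    intro x hx
    rw [List.mem_ofFn] at hx
    obtain ⟨i, rfl⟩ := hx
    exact hk i
  obtain ⟨bs, hblen, hpw, hfa⟩ := topExists ws (w k) hpos hMx (le_of_lt (hw k))
  have hblen' : bs.length = m := by rw [hblen, hlenws]
  refine ⟨fun i => bs.get (Fin.cast hblen'.symm i), k, ?_, ?_, ?_⟩
  · intro i
    have := List.forall₂_iff_get.1 hfa
    obtain ⟨hl, hget⟩ := this
    exact (hget i (by omega) (by omega)).1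
  · intro i j hij
    have := List.pairwise_iff_get.1 hpw (Fin.cast hblen'.symm i) (Fin.cast hblen'.symm j)
      (by simpa using hij)
    exact prec_of_sval_lt _ _ this
  · intro i
    obtain ⟨hl, hget⟩ := List.forall₂_iff_get.1 hfa
    have hkey := (hget i (by omega) (by omega)).2
    have hwsi : ws.get ⟨(i : ℕ), by omega⟩ = w i := by
      simp [hwsdef]
    rw [hwsi, hsumws] at hkey
    -- hkey : w i * 2 ^ (length) ≤ (∑ j, w j) + w k
    have hkey2 : w i * 2 ^ (bs.get (Fin.cast hblen'.symm i)).length ≤ (∑ j, w j) + w k :=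
      hkey
    set len := (bs.get (Fin.cast hblen'.symm i)).length with hlendef
    rw [Int.le_floor]
    push_cast
    have hwi : 0 < w i := hw i
    have hWpos : 0 < (∑ j, w j) + w k := by
      have h2 : 0 < (2:ℝ) ^ len := by positivity
      have h3 := mul_pos (hw i) h2
      linarith [hkey2]
    have hlog : logb 2 (w i * 2 ^ len) ≤ logb 2 ((∑ j, w j) + w k) :=
      Real.logb_le_logb_of_le (by norm_num) (by positivity) hkey2
    rw [Real.logb_mul (ne_of_gt hwi) (by positivity), Real.logb_pow,
      Real.logb_self_eq_one (by norm_num)] at hlog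
    -- hlog : logb 2 (w i) + len * 1 ≤ logb 2 (...)
    linarith
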